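/- Let V be a finite-dimensional real inner product space and K : V × V → V a symmetric bilinear map with g(K(X,Y),Z) totally symmetric and [K,K] = 0. Then there exists an orthonormal basis e_1,…,e_n of V and real numbers λ_1,…,λ_n such that K(e_i,e_i) = λ_i e_i for all i and K(e_i,e_j) = 0 for all i ≠ j. -/

import Mathlib

open scoped RealInnerProductSpace
open LinearMap.IsSymmetric

/-- if `[K,K] = 0` then `K` is simultaneously orthogonally
diagonalizable: there is an orthonormal basis `e_i` with `K(e_i,e_i) = λ_i e_i`
and `K(e_i,e_j) = 0` for `i ≠ j`. -/
theorem stmt_7 {V : Type*} [NormedAddCommGroup V] [InnerProductSpace ℝ V]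
    [FiniteDimensional ℝ V] (K : V →ₗ[ℝ] V →ₗ[ℝ] V)
    (hKcomm : ∀ X Y : V, K X Y = K Y X)
    (hCsym : ∀ X Y Z : V, ⟪K X Y, Z⟫ = ⟪K X Z, Y⟫)
    (hKK : ∀ X Y Z : V, K X (K Y Z) = K Y (K X Z)) :
    ∃ (b : OrthonormalBasis (Fin (Module.finrank ℝ V)) ℝ V)
      (lam : Fin (Module.finrank ℝ V) → ℝ),
      (∀ i, K (b i) (b i) = lam i • b i) ∧
      (∀ i j, i ≠ j → K (b i) (b j) = 0) := by
  classical
  set n := Module.finrank ℝ V with hn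
  let v : OrthonormalBasis (Fin n) ℝ V := stdOrthonormalBasis ℝ V
  let T : Fin n → Module.End ℝ V := fun i => K (v i)
  have hTsym : ∀ i, (T i).IsSymmetric := fun i x y =>
    (hCsym (v i) x y).trans (real_inner_comm _ _)
  have hComm : Pairwise (Function.onFun Commute T) := by
    intro i j _
    ext z
    exact hKK (v i) (v j) z
  have hInt := LinearMap.IsSymmetric.directSum_isInternal_of_pairwise_commute hTsym hComm
  have hOrth := orthogonalFamily_iInf_eigenspaces hTsym
  set W : (Fin n → ℝ) → Submodule ℝ V :=
    fun γ => ⨅ j, Module.End.eigenspace (T j) (γ j) with hW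
  have hfin : {γ | W γ ≠ ⊥}.Finite :=
    WellFoundedGT.finite_ne_bot_of_iSupIndep hInt.submodule_iSupIndep
  haveI : Fintype {γ // W γ ≠ ⊥} := hfin.fintype
  have hInt' : DirectSum.IsInternal (fun γ : {γ // W γ ≠ ⊥} => W γ) :=
    DirectSum.isInternal_ne_bot_iff.mpr hInt
  have hOrth' : OrthogonalFamily ℝ (fun γ : {γ // W γ ≠ ⊥} => W γ)
      (fun γ : {γ // W γ ≠ ⊥} => (W γ.1).subtypeₗᵢ) :=
    hOrth.comp Subtype.val_injective
  let b : OrthonormalBasis (Fin n) ℝ V := hInt'.subordinateOrthonormalBasis rfl hOrth'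
  have hmem : ∀ a, ∃ γ : Fin n → ℝ, ∀ j, K (v j) (b a) = γ j • b a := by
    intro a
    refine ⟨(hInt'.subordinateOrthonormalBasisIndex rfl a hOrth').1, fun j => ?_⟩
    have h := hInt'.subordinateOrthonormalBasis_subordinate rfl a hOrth'
    have h' := (Submodule.mem_iInf _).mp h j
    exact (Module.End.mem_eigenspace_iff).mp h'
  have hEig : ∀ (X : V) a, ∃ c : ℝ, K X (b a) = c • b a := by
    intro X a
    obtain ⟨γ, hγ⟩ := hmem a
    refine ⟨∑ j, v.repr X j * γ j, ?_⟩
    conv_lhs => rw [← v.sum_repr X]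
    rw [map_sum, LinearMap.sum_apply, Finset.sum_smul]
    refine Finset.sum_congr rfl fun j _ => ?_
    rw [map_smul, LinearMap.smul_apply, hγ j, smul_smul]
  choose lam hlam using fun a => hEig (b a) a
  refine ⟨b, lam, hlam, ?_⟩
  intro i j hij
  obtain ⟨c, hc⟩ := hEig (b i) j
  obtain ⟨d, hd⟩ := hEig (b j) i
  have hcd : c • b j = d • b i := by rw [← hc, ← hd, hKcomm]
  have hc0 : c = 0 := by
    have h1 : ⟪b j, c • b j⟫ = c := by
      rw [real_inner_smul_right, real_inner_self_eq_norm_sq, b.orthonormal.1 j]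
      simp
    have h2 : ⟪b j, d • b i⟫ = 0 := by
      rw [real_inner_smul_right, b.orthonormal.2 (Ne.symm hij)]
      simp
    rw [← h1, hcd, h2]
  rw [hc, hc0, zero_smul]
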